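/- The recurrence Q(Y) = 2√Y · Q(√Y) + c·Y with base case Q(Y) ≤ c·Y for Y ≤ m (with m ≥ 2) satisfies Q(n) = O(n · log n / log m). Precisely: if Q : ℕ → ℝ satisfies Q(Y) ≤ 2·⌈√Y⌉·Q(⌈√Y⌉) + c·Y for Y > m and Q(Y) ≤ c·Y for Y ≤ m, then there exists c' with Q(n) ≤ c'·n·(log n)/(log m) for all n ≥ 2. -/

import Mathlib

set_option maxHeartbeats 1000000
open Real Filter Asymptotics

private lemma step1 (L : ℝ) (hL0 : 0 < L) :
    ∃ n₀ : ℕ, ∀ n : ℕ, n₀ ≤ n →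
      3 * (Real.sqrt n * Real.log n) + (2 * Real.sqrt n + 6) ≤ L / 4 * n := by
  have hlog : Real.log =o[atTop] fun x : ℝ => x ^ ((1:ℝ)/2) :=
    isLittleO_log_rpow_atTop (by norm_num)
  have h1 : (fun x : ℝ => Real.sqrt x * Real.log x) =o[atTop] (fun x : ℝ => x) := by
    have h := (Asymptotics.isBigO_refl (fun x : ℝ => x ^ ((1:ℝ)/2)) atTop).mul_isLittleO hlog
    refine h.congr' ?_ ?_
    · filter_upwards [eventually_ge_atTop (0:ℝ)] with x hx
      rw [Real.sqrt_eq_rpow]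
    · filter_upwards [eventually_gt_atTop (0:ℝ)] with x hx
      rw [← Real.rpow_add hx]; norm_num
  have h2 : (fun x : ℝ => 2 * Real.sqrt x + 6) =o[atTop] (fun x : ℝ => x) := by
    have hb : (fun x : ℝ => 2 * Real.sqrt x + 6) =O[atTop] (fun x : ℝ => Real.sqrt x * Real.log x) := by
      rw [Asymptotics.isBigO_iff]
      refine ⟨8, ?_⟩
      filter_upwards [eventually_ge_atTop (Real.exp 1)] with x hx
      have hx1 : (1:ℝ) ≤ x := le_trans (by nlinarith [Real.exp_one_gt_d9]) hx
      have hlog1 : 1 ≤ Real.log x := by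
        rw [← Real.log_exp 1]; exact Real.log_le_log (Real.exp_pos 1) hx
      have hs1 : 1 ≤ Real.sqrt x := by
        rw [show (1:ℝ) = Real.sqrt 1 by simp]; exact Real.sqrt_le_sqrt hx1
      rw [Real.norm_eq_abs, Real.norm_eq_abs, abs_of_nonneg (by positivity),
        abs_of_nonneg (by positivity)]
      nlinarith
    exact hb.trans_isLittleO h1
  have h3 := ((h1.const_mul_left 3).add h2).def (by positivity : (0:ℝ) < L/4)
  rw [eventually_atTop] at h3
  obtain ⟨X, hX⟩ := h3
  refine ⟨⌈max X 0⌉₊ + 1, fun n hn => ?_⟩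
  have hnX : X ≤ (n : ℝ) := by
    have : max X 0 ≤ (n : ℝ) := by
      calc max X 0 ≤ (⌈max X 0⌉₊ : ℝ) := Nat.le_ceil _
      _ ≤ (n : ℝ) := by exact_mod_cast Nat.le_of_succ_le hn
    exact le_trans (le_max_left _ _) this
  have h4 := hX (n : ℝ) hnX
  have hnn : (0:ℝ) ≤ (n:ℝ) := Nat.cast_nonneg n
  rw [Real.norm_eq_abs, Real.norm_eq_abs, abs_of_nonneg hnn] at h4
  calc 3 * (Real.sqrt n * Real.log n) + (2 * Real.sqrt n + 6)
      ≤ |3 * (Real.sqrt n * Real.log n) + (2 * Real.sqrt n + 6)| := le_abs_self _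
    _ ≤ L / 4 * n := h4

/-- The recurrence `Q(Y) = 2√Y·Q(⌈√Y⌉) + c·Y` with base `Q(Y) ≤ c·Y` for `Y ≤ m`
satisfies `Q(n) = O(n · log n / log m)`. -/
theorem stmt_1 (Q : ℕ → ℝ) (m : ℕ) (c : ℝ) (hc : 0 < c) (hm : 2 ≤ m)
    (hrec : ∀ Y : ℕ, m < Y →
      Q Y ≤ 2 * (⌈Real.sqrt Y⌉₊ : ℝ) * Q ⌈Real.sqrt Y⌉₊ + c * Y)
    (hbase : ∀ Y : ℕ, Y ≤ m → Q Y ≤ c * Y) :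
    ∃ c' : ℝ, ∀ n : ℕ, 2 ≤ n →
      Q n ≤ c' * n * Real.log n / Real.log m := by
  set L := Real.log 2 with hLdef
  have hL0 : 0 < L := Real.log_pos (by norm_num)
  obtain ⟨n₀, hn₀⟩ := step1 L hL0
  set N := max m n₀ with hNdef
  have hN2 : 2 ≤ N := le_trans hm (le_max_left _ _)
  have hne : (Finset.Icc 2 N).Nonempty := ⟨2, Finset.mem_Icc.mpr ⟨le_refl _, hN2⟩⟩
  set A : ℝ := max (4*c/L) ((Finset.Icc 2 N).sup' hne fun k => Q k / (k * (Real.log k - L/2)))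
    with hAdef
  have hA0 : 0 < A := lt_of_lt_of_le (by positivity) (le_max_left _ _)
  have hcA : c ≤ A * L / 4 := by
    have h := le_max_left (4*c/L) ((Finset.Icc 2 N).sup' hne fun k => Q k / (k * (Real.log k - L/2)))
    rw [← hAdef, div_le_iff₀ hL0] at h
    nlinarith
  have key : ∀ n : ℕ, 2 ≤ n → Q n ≤ A * n * (Real.log n - L/2) := by
    intro n
    induction n using Nat.strong_induction_on with
    | _ n IH =>
    intro hn2
    have hn0 : (0:ℝ) < n := by positivity
    have hn2' : (2:ℝ) ≤ (n:ℝ) := by exact_mod_cast hn2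
    have hlogn : L ≤ Real.log n := Real.log_le_log (by norm_num) hn2'
    by_cases hcase : n ≤ N
    · have hD : 0 < (n:ℝ) * (Real.log n - L/2) := by
        apply mul_pos hn0; linarith
      have hg : Q n / ((n:ℝ) * (Real.log n - L/2)) ≤ A :=
        le_trans (Finset.le_sup' (fun k => Q k / ((k:ℝ) * (Real.log k - L/2))) (Finset.mem_Icc.mpr ⟨hn2, hcase⟩)) (le_max_right _ _)
      calc Q n = Q n / ((n:ℝ)*(Real.log n - L/2)) * ((n:ℝ)*(Real.log n - L/2)) :=
            (div_mul_cancel₀ (Q n) hD.ne').symm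
        _ ≤ A * ((n:ℝ)*(Real.log n - L/2)) := mul_le_mul_of_nonneg_right hg hD.le
        _ = A * n * (Real.log n - L/2) := by ring
    · push_neg at hcase
      have hmn : m < n := lt_of_le_of_lt (le_max_left _ _) hcase
      have hn3 : 3 ≤ n := lt_of_le_of_lt hN2 hcase
      have hn3' : (3:ℝ) ≤ (n:ℝ) := by exact_mod_cast hn3
      set t := Real.sqrt (n:ℝ) with htdef
      set s := ⌈t⌉₊ with hsdef
      set u := Real.log n with hudef
      have ht0 : 0 < t := Real.sqrt_pos.mpr hn0
      have ht1 : 1 < t := by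
        rw [htdef]
        rw [show (1:ℝ) = Real.sqrt 1 by simp]
        exact Real.sqrt_lt_sqrt (by norm_num) (by linarith)
      have ht2 : t^2 = (n:ℝ) := Real.sq_sqrt (Nat.cast_nonneg n)
      have hs2 : 2 ≤ s := by
        have : 1 < s := Nat.lt_ceil.mpr (by exact_mod_cast ht1)
        omega
      have hs2' : (2:ℝ) ≤ (s:ℝ) := by exact_mod_cast hs2
      have hts : t ≤ (s:ℝ) := Nat.le_ceil t
      have hst : (s:ℝ) < t + 1 := Nat.ceil_lt_add_one ht0.le
      have hsn : s < n := by
        have h1 : t ≤ (n:ℝ) - 1 := by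
          rw [htdef, show (n:ℝ) - 1 = Real.sqrt (((n:ℝ)-1)^2) by
            rw [Real.sqrt_sq (by linarith)]]
          exact Real.sqrt_le_sqrt (by nlinarith)
        have : (s:ℝ) < (n:ℝ) := by linarith
        exact_mod_cast this
      have hIH := IH s hsn hs2
      have hrecn := hrec n hmn
      -- log s bounds
      have hlogsL : L/2 ≤ Real.log s := by
        have : L ≤ Real.log s := Real.log_le_log (by norm_num) hs2'
        linarith
      have hlogs : Real.log s ≤ u / 2 + 1/t := by
        have h1 : Real.log s ≤ Real.log (t + 1) :=
          Real.log_le_log (by linarith) hst.le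
        have h2 : Real.log (t + 1) = Real.log t + Real.log (1 + 1/t) := by
          rw [← Real.log_mul ht0.ne' (by positivity)]
          congr 1; field_simp
        have h3 : Real.log (1 + 1/t) ≤ 1/t := by
          have := Real.log_le_sub_one_of_pos (show (0:ℝ) < 1 + 1/t by positivity)
          linarith
        have h4 : Real.log t = u / 2 := by
          rw [htdef, hudef]; exact Real.log_sqrt (Nat.cast_nonneg n)
        linarith
      -- threshold
      have hthr : 3 * (t * u) + (2 * t + 6) ≤ L / 4 * n :=
        hn₀ n (le_of_lt (lt_of_le_of_lt (le_max_right m n₀) hcase))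
      -- chain
      have hu0 : 0 ≤ u := by rw [hudef]; exact Real.log_nonneg (by linarith)
      have step1' : Q n ≤ 2*(s:ℝ)*(A*(s:ℝ)*(Real.log s - L/2)) + c*n := by
        have h2s : (0:ℝ) ≤ 2*(s:ℝ) := by positivity
        nlinarith [mul_le_mul_of_nonneg_left hIH h2s]
      have hv0 : (0:ℝ) < 1/t := by positivity
      have hv1 : 1/t ≤ 1 := by rw [div_le_one ht0]; linarith
      have htv : t * (1/t) = 1 := by field_simp
      have step2' : 2*(s:ℝ)*(A*(s:ℝ)*(Real.log s - L/2)) ≤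
          2*A*((t+1)^2*(u/2 + 1/t - L/2)) := by
        have hX0 : 0 ≤ Real.log s - L/2 := by linarith
        have hXle : Real.log s - L/2 ≤ u/2 + 1/t - L/2 := by linarith
        have hs2sq : (s:ℝ)^2 ≤ (t+1)^2 := by nlinarith
        have := mul_le_mul hs2sq hXle hX0 (by positivity)
        nlinarith
      have step3' : 2*A*((t+1)^2*(u/2 + 1/t - L/2)) + c*n ≤ A*n*(u - L/2) := by
        have e3 : (t+1)^2*(1/t) = t + 2 + 1/t := by field_simp; ring
        have e4 : (t+1)^2*(u-L) ≤ t^2*u - t^2*L + 2*t*u + u := by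
          nlinarith [mul_pos ht0 hL0]
        have e4' : A*((t+1)^2*(u-L)) ≤ A*(t^2*u - t^2*L + 2*t*u + u) :=
          mul_le_mul_of_nonneg_left e4 hA0.le
        have e5 : t^2*u - t^2*L + 2*t*u + u + (2*t + 4 + 2*(1/t)) ≤
            t^2*u - t^2*L + (3*(t*u) + (2*t + 6)) := by
          nlinarith [mul_nonneg hu0 (by linarith : (0:ℝ) ≤ t - 1)]
        have e5' : A*(t^2*u - t^2*L + 2*t*u + u + (2*t + 4 + 2*(1/t))) ≤
            A*(t^2*u - t^2*L + (3*(t*u) + (2*t + 6))) :=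
          mul_le_mul_of_nonneg_left e5 hA0.le
        have e6 : A*(3*(t*u) + (2*t + 6)) ≤ A*(L/4*n) :=
          mul_le_mul_of_nonneg_left hthr hA0.le
        have e7 : c*(n:ℝ) ≤ A*L/4*(n:ℝ) := mul_le_mul_of_nonneg_right hcA hn0.le
        have lhs_eq : 2*A*((t+1)^2*(u/2 + 1/t - L/2)) =
            A*((t+1)^2*(u-L)) + 2*A*((t+1)^2*(1/t)) := by ring
        rw [lhs_eq, e3]
        have hn_eq : A*(n:ℝ)*(u - L/2) = A*(t^2*u) - A*(t^2*L) + A*(L/4*n) + A*L/4*n := by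
          rw [← ht2]; ring
        nlinarith [e4', e5', e6, e7]
      linarith [step1', step2', step3']
  refine ⟨A * Real.log m, fun n hn => ?_⟩
  have hlogm : 0 < Real.log m :=
    Real.log_pos (by exact_mod_cast lt_of_lt_of_le one_lt_two hm)
  have hk := key n hn
  have hn0 : (0:ℝ) ≤ (n:ℝ) := Nat.cast_nonneg n
  have h1 : Q n ≤ A * n * Real.log n := by
    have : A * (n:ℝ) * (L/2) ≥ 0 := by positivity
    nlinarith
  calc Q n ≤ A * n * Real.log n := h1
    _ = A * Real.log m * n * Real.log n / Real.log m := by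
        field_simp
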